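/- Let K be a field of characteristic zero and let τ : K(x)[h] → S(K) be a ring homomorphism commuting with the shift, where σ(x) = x+1, σ(h) = h + 1/(x+1), h transcendental over K(x), τ restricted to K(x) is the evaluation embedding and τ(h) = ⟨H_k⟩ is the germ of harmonic numbers. Then τ is injective. -/

import Mathlib

open Filter

/-- The ring of sequences `S(K)`: germs at infinity of sequences `ℕ → K`. -/
abbrev SeqRing (K : Type) [Field K] : Type := (Filter.atTop : Filter ℕ).Germ K

/-- The harmonic numbers `H_k = ∑_{i=1}^k 1/i` in `K`. -/
noncomputable def Hnum (K : Type) [Field K] [CharZero K] (k : ℕ) : K :=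
  ∑ i ∈ Finset.Icc 1 k, (1 : K) / (i : K)

open Polynomial

section Helpers
variable {K : Type} [Field K] [CharZero K]

lemma evt_ne_zero (q : K[X]) (hq : q ≠ 0) : ∀ᶠ k : ℕ in atTop, q.eval (k : K) ≠ 0 := by
  have hfin : {x : K | q.IsRoot x}.Finite := Polynomial.finite_setOf_isRoot hq
  have : {k : ℕ | q.eval (k : K) = 0}.Finite := by
    apply Set.Finite.preimage (f := (Nat.cast : ℕ → K)) (Set.injOn_of_injective Nat.cast_injective) hfin
  rw [← Nat.cofinite_eq_atTop]
  exact this.eventually_cofinite_notMem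

lemma poly_zero_of_evt (q : K[X]) (h : ∀ᶠ k : ℕ in atTop, q.eval (k : K) = 0) : q = 0 := by
  by_contra hq
  obtain ⟨k, hk1, hk2⟩ := ((evt_ne_zero q hq).and h).exists
  exact hk1 hk2

lemma Hnum_succ (k : ℕ) : Hnum K (k+1) = Hnum K k + ((k : K) + 1)⁻¹ := by
  rw [Hnum, Finset.sum_Icc_succ_top (by omega : 1 ≤ k + 1)]
  push_cast
  rw [one_div]
  rfl

end Helpers

section RealFacts

lemma Hnum_real_eq (k : ℕ) : Hnum ℝ k = ∑ i ∈ Finset.range k, (1 : ℝ) / (i + 1) := by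
  induction k with
  | zero => simp [Hnum]
  | succ n ih =>
    rw [Hnum_succ, ih, Finset.sum_range_succ, one_div]

lemma tendsto_Hnum_real : Tendsto (fun k => Hnum ℝ k) atTop atTop := by
  have := Real.tendsto_sum_range_one_div_nat_succ_atTop
  apply this.congr
  intro n
  rw [Hnum_real_eq]

lemma tendsto_Hnum_real_div : Tendsto (fun k : ℕ => Hnum ℝ k / k) atTop (nhds 0) := by
  have hu : Tendsto (fun i : ℕ => (1 : ℝ) / (i + 1)) atTop (nhds 0) := by
    apply tendsto_one_div_add_atTop_nhds_zero_nat
  have := hu.cesaro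
  apply this.congr
  intro n
  rw [Hnum_real_eq, inv_mul_eq_div]

lemma Hnum_real_le (k : ℕ) : Hnum ℝ k ≤ k := by
  rw [Hnum]
  calc (∑ i ∈ Finset.Icc 1 k, (1:ℝ)/(i:ℝ)) ≤ ∑ i ∈ Finset.Icc 1 k, 1 := by
        apply Finset.sum_le_sum
        intro i hi
        simp only [Finset.mem_Icc] at hi
        have h1 : (1:ℝ) ≤ (i:ℝ) := by exact_mod_cast hi.1
        rw [div_le_one (by linarith)]
        exact h1
    _ = ((Finset.Icc 1 k).card : ℝ) := by simp
    _ ≤ k := by simp [Nat.card_Icc]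

lemma Hnum_real_pos {k : ℕ} (hk : 1 ≤ k) : 0 < Hnum ℝ k := by
  induction k with
  | zero => omega
  | succ n ih =>
    rw [Hnum_succ]
    rcases Nat.eq_zero_or_pos n with h | h
    · subst h
      simp only [Hnum]
      norm_num
    · have := ih h
      positivity

end RealFacts

lemma no_rat_real (p q : ℝ[X]) (hq : q ≠ 0)
    (h : ∀ᶠ k : ℕ in atTop, p.eval (k : ℝ) = Hnum ℝ k * q.eval (k : ℝ)) : False := by
  have hqk : ∀ᶠ k : ℕ in atTop, q.eval (k : ℝ) ≠ 0 := evt_ne_zero q hq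
  have hk1 : ∀ᶠ k : ℕ in atTop, 1 ≤ k := eventually_ge_atTop 1
  have tendstoNat : Tendsto (fun k : ℕ => (k : ℝ)) atTop atTop := tendsto_natCast_atTop_atTop
  have hp : p ≠ 0 := by
    rintro rfl
    have : ∀ᶠ k : ℕ in atTop, False := by
      filter_upwards [h, hqk, hk1] with k h1 h2 h3
      have hH := Hnum_real_pos h3
      simp only [Polynomial.eval_zero] at h1
      rcases mul_eq_zero.mp h1.symm with h4 | h4
      · exact absurd h4 (ne_of_gt hH)
      · exact h2 h4
    exact this.exists.choose_spec
  rcases lt_trichotomy p.degree (q.degree + 1) with hd | hd | hd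
  · -- degree p ≤ degree q : p/q tends to finite limit, but Hnum → ∞
    have hd' : p.degree ≤ q.degree := by
      rcases le_or_gt p.degree q.degree with h' | h'
      · exact h'
      · exact absurd hd (not_lt.mpr (Nat.WithBot.add_one_le_of_lt h'))
    obtain ⟨c, hc⟩ : ∃ c : ℝ, Tendsto (fun x : ℝ => p.eval x / q.eval x) atTop (nhds c) := by
      rcases lt_or_eq_of_le hd' with h' | h'
      · exact ⟨0, Polynomial.div_tendsto_zero_of_degree_lt p q h'⟩
      · exact ⟨_, Polynomial.div_tendsto_leadingCoeff_div_of_degree_eq p q h'⟩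
    have hc2 : Tendsto (fun k : ℕ => Hnum ℝ k) atTop (nhds c) := by
      apply (hc.comp tendstoNat).congr'
      filter_upwards [h, hqk] with k h1 h2
      simp only [Function.comp]
      rw [h1, mul_div_assoc, div_self h2, mul_one]
    exact not_tendsto_atTop_of_tendsto_nhds hc2 tendsto_Hnum_real
  · -- degree p = degree q + 1: p/(Xq) → c ≠ 0 but Hnum/k → 0
    have hXq : (X * q : ℝ[X]) ≠ 0 := mul_ne_zero Polynomial.X_ne_zero hq
    have hdeg : p.degree = (X * q : ℝ[X]).degree := by
      rw [Polynomial.degree_mul, Polynomial.degree_X, hd, add_comm]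
    have hc := Polynomial.div_tendsto_leadingCoeff_div_of_degree_eq p (X * q) hdeg
    have hcne : p.leadingCoeff / (X * q : ℝ[X]).leadingCoeff ≠ 0 :=
      div_ne_zero (Polynomial.leadingCoeff_ne_zero.mpr hp) (Polynomial.leadingCoeff_ne_zero.mpr hXq)
    have hc2 : Tendsto (fun k : ℕ => Hnum ℝ k / k) atTop
        (nhds (p.leadingCoeff / (X * q : ℝ[X]).leadingCoeff)) := by
      apply (hc.comp tendstoNat).congr'
      filter_upwards [h, hqk, hk1] with k h1 h2 h3
      have hk0 : (k : ℝ) ≠ 0 := by positivity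
      simp only [Function.comp]
      rw [Polynomial.eval_mul, Polynomial.eval_X, h1]
      field_simp
    exact hcne (tendsto_nhds_unique hc2 tendsto_Hnum_real_div)
  · -- degree p > degree (Xq): (Xq)/p → 0 but k/H ≥ 1
    have hdeg : (X * q : ℝ[X]).degree < p.degree := by
      rwa [Polynomial.degree_mul, Polynomial.degree_X, add_comm]
    have hc := Polynomial.div_tendsto_zero_of_degree_lt (X * q) p hdeg
    have hc2 : Tendsto (fun k : ℕ => (k : ℝ) / Hnum ℝ k) atTop (nhds 0) := by
      apply (hc.comp tendstoNat).congr'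
      filter_upwards [h, hqk, hk1] with k h1 h2 h3
      have hH := Hnum_real_pos h3
      simp only [Function.comp]
      rw [Polynomial.eval_mul, Polynomial.eval_X, h1]
      field_simp
    have hge : ∀ᶠ k : ℕ in atTop, (1 : ℝ) ≤ (k : ℝ) / Hnum ℝ k := by
      filter_upwards [hk1] with k h3
      have hH := Hnum_real_pos h3
      rw [le_div_iff₀ hH, one_mul]
      exact Hnum_real_le k
    have := ge_of_tendsto hc2 hge
    linarith

lemma Hnum_cast (K : Type) [Field K] [CharZero K] (k : ℕ) :
    Hnum K k = algebraMap ℚ K (Hnum ℚ k) := by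
  rw [Hnum, Hnum, map_sum]
  apply Finset.sum_congr rfl
  intro i _
  rw [map_div₀, map_one, map_natCast]

lemma no_rat {K : Type} [Field K] [CharZero K] (P Q : K[X]) (hQ : Q ≠ 0)
    (h : ∀ᶠ k : ℕ in atTop, P.eval (k : K) = Hnum K k * Q.eval (k : K)) : False := by
  classical
  set B := Module.Basis.ofVectorSpace ℚ K with hB
  have hi0 : Q.coeff Q.natDegree ≠ 0 := by
    rw [← Polynomial.leadingCoeff]
    exact Polynomial.leadingCoeff_ne_zero.mpr hQ
  obtain ⟨j, hj⟩ : ∃ j, B.repr (Q.coeff Q.natDegree) j ≠ 0 := by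
    by_contra hc
    push_neg at hc
    apply hi0
    have : B.repr (Q.coeff Q.natDegree) = 0 := Finsupp.ext hc
    simpa using congrArg B.repr.symm this
  set ℓ : K →ₗ[ℚ] ℚ := B.coord j with hℓ
  set n := max P.natDegree Q.natDegree + 1 with hn
  have keyev : ∀ (R : K[X]) (k : ℕ), R.natDegree < n →
      (∑ i ∈ Finset.range n, Polynomial.C (ℓ (R.coeff i)) * X ^ i : ℚ[X]).eval (k : ℚ)
        = ℓ (R.eval (k : K)) := by
    intro R k hR
    rw [Polynomial.eval_eq_sum_range' hR, map_sum, Polynomial.eval_finset_sum]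
    apply Finset.sum_congr rfl
    intro i _
    have hcast : ((k : K)) ^ i = algebraMap ℚ K ((k : ℚ) ^ i) := by
      rw [map_pow, map_natCast]
    rw [hcast, mul_comm (R.coeff i), ← Algebra.smul_def, map_smul]
    rw [Polynomial.eval_mul, Polynomial.eval_C, Polynomial.eval_pow, Polynomial.eval_X,
      smul_eq_mul, mul_comm]
  set Pq : ℚ[X] := ∑ i ∈ Finset.range n, Polynomial.C (ℓ (P.coeff i)) * X ^ i with hPq
  set Qq : ℚ[X] := ∑ i ∈ Finset.range n, Polynomial.C (ℓ (Q.coeff i)) * X ^ i with hQq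
  have hQqc : Qq.coeff Q.natDegree = ℓ (Q.coeff Q.natDegree) := by
    rw [hQq, Polynomial.finset_sum_coeff]
    rw [Finset.sum_eq_single Q.natDegree]
    · simp
    · intro i _ hne
      rw [Polynomial.coeff_C_mul, Polynomial.coeff_X_pow, if_neg (fun hc => hne hc.symm), mul_zero]
    · intro hmem
      exfalso
      exact hmem (Finset.mem_range.mpr (by omega))
  have hQq0 : Qq ≠ 0 := by
    intro hc
    rw [hc] at hQqc
    simp only [Polynomial.coeff_zero] at hQqc
    exact hj hQqc.symm
  have hrat : ∀ᶠ k : ℕ in atTop, Pq.eval (k : ℚ) = Hnum ℚ k * Qq.eval (k : ℚ) := by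
    filter_upwards [h] with k hk
    rw [hPq, hQq, keyev P k (by omega), keyev Q k (by omega), hk]
    rw [Hnum_cast K, ← Algebra.smul_def, map_smul]
    simp [smul_eq_mul]
  -- move to ℝ
  set φ : ℚ →+* ℝ := algebraMap ℚ ℝ with hφ
  apply no_rat_real (Pq.map φ) (Qq.map φ)
  · rwa [Ne, Polynomial.map_eq_zero_iff (algebraMap ℚ ℝ).injective]
  · filter_upwards [hrat] with k hk
    have h1 : (Pq.map φ).eval ((k : ℕ) : ℝ) = φ (Pq.eval (k : ℚ)) := by
      rw [← map_natCast φ (k : ℕ), Polynomial.eval_map, Polynomial.eval₂_at_apply]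
    have h2 : (Qq.map φ).eval ((k : ℕ) : ℝ) = φ (Qq.eval (k : ℚ)) := by
      rw [← map_natCast φ (k : ℕ), Polynomial.eval_map, Polynomial.eval₂_at_apply]
    rw [h1, h2, hk, map_mul, Hnum_cast ℝ]

section Shift
variable {K : Type} [Field K] [CharZero K]

noncomputable def shiftP : K[X] →+* K[X] :=
  Polynomial.eval₂RingHom Polynomial.C (X + 1)

lemma shiftP_apply (p : K[X]) : shiftP p = p.comp (X + 1) := rfl

lemma shiftP_ne_zero {p : K[X]} (hp : p ≠ 0) : (shiftP p : K[X]) ≠ 0 := by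
  intro hc
  apply hp
  have : (shiftP p).comp (X + Polynomial.C (-1)) = p := by
    rw [shiftP_apply, Polynomial.comp_assoc]
    have : ((X + 1 : K[X]).comp (X + Polynomial.C (-1))) = X := by
      simp [Polynomial.add_comp]
    rw [this, Polynomial.comp_X]
  rw [← this, hc, Polynomial.zero_comp]

lemma shiftP_eval (p : K[X]) (x : K) : (shiftP p).eval x = p.eval (x + 1) := by
  rw [shiftP_apply, Polynomial.eval_comp]
  simp

noncomputable def shiftR : RatFunc K →+* RatFunc K :=
  RatFunc.liftRingHom ((algebraMap K[X] (RatFunc K)).comp shiftP) (by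
    intro x hx
    rw [mem_nonZeroDivisors_iff_ne_zero] at hx
    rw [Submonoid.mem_comap, mem_nonZeroDivisors_iff_ne_zero]
    exact RatFunc.algebraMap_ne_zero (shiftP_ne_zero hx))

lemma shiftR_apply (a : RatFunc K) :
    shiftR a = algebraMap K[X] (RatFunc K) (shiftP a.num) /
      algebraMap K[X] (RatFunc K) (shiftP a.denom) :=
  RatFunc.liftRingHom_apply _ _ a

lemma shiftR_alg (p : K[X]) :
    shiftR (algebraMap K[X] (RatFunc K) p) = algebraMap K[X] (RatFunc K) (shiftP p) := by
  rw [shiftR_apply, RatFunc.num_algebraMap, RatFunc.denom_algebraMap]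
  simp

noncomputable def SGfun (K : Type) [Field K] (g : SeqRing K) : SeqRing K :=
  g.compTendsto (fun k : ℕ => k + 1) (tendsto_add_atTop_nat 1)

lemma SGfun_coe {K : Type} [Field K] (f : ℕ → K) :
    SGfun K (↑f : SeqRing K) = ↑(fun k => f (k + 1)) := by
  rw [SGfun, Filter.Germ.coe_compTendsto]
  rfl

noncomputable def SG (K : Type) [Field K] : SeqRing K →+* SeqRing K where
  toFun := SGfun K
  map_one' := by rw [← Filter.Germ.coe_one, SGfun_coe]; rfl
  map_zero' := by
    show SGfun K ((0 : ℕ → K) : SeqRing K) = ((0 : ℕ → K) : SeqRing K)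
    rw [SGfun_coe]
    rfl
  map_mul' f g := Filter.Germ.inductionOn₂ f g fun f g => by
    show SGfun K ((f : ℕ → K) * g : ℕ → K) = SGfun K (f : ℕ → K) * SGfun K (g : ℕ → K)
    rw [SGfun_coe, SGfun_coe, SGfun_coe, ← Filter.Germ.coe_mul]
    rfl
  map_add' f g := Filter.Germ.inductionOn₂ f g fun f g => by
    show SGfun K ((f : ℕ → K) + g : ℕ → K) = SGfun K (f : ℕ → K) + SGfun K (g : ℕ → K)
    rw [SGfun_coe, SGfun_coe, SGfun_coe, ← Filter.Germ.coe_add]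
    rfl

lemma SG_coe {K : Type} [Field K] (f : ℕ → K) :
    SG K (↑f : SeqRing K) = ↑(fun k => f (k + 1)) := SGfun_coe f

end Shift

section Core
variable {K : Type} [Field K] [CharZero K]

noncomputable def uu (K : Type) [Field K] [CharZero K] : RatFunc K :=
  (algebraMap K[X] (RatFunc K) (X + 1))⁻¹

lemma hXne : algebraMap K[X] (RatFunc K) (X + 1) ≠ 0 :=
  RatFunc.algebraMap_ne_zero (by
    intro hc
    have := congrArg (Polynomial.eval (0 : K)) hc
    simp at this)

lemma hev (a : RatFunc K) (k : ℕ) :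
    RatFunc.eval (RingHom.id K) (k : K) a
      = a.num.eval (k : K) / a.denom.eval (k : K) := rfl

variable (Φ : RatFunc K →+* SeqRing K)
variable (hΦ : ∀ a : RatFunc K,
    Φ a = ((fun k : ℕ => RatFunc.eval (RingHom.id K) (k : K) a : ℕ → K) : SeqRing K))

include hΦ

omit hΦ in
lemma germ_natCast (m : ℕ) :
    ((fun _ : ℕ => (m : K) : ℕ → K) : SeqRing K) = (m : SeqRing K) := by
  have := map_natCast (Filter.Germ.coeRingHom (atTop : Filter ℕ) : (ℕ → K) →+* SeqRing K) m
  rw [← this]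
  rfl

lemma Phi_alg (p : K[X]) :
    Φ (algebraMap K[X] (RatFunc K) p) = ((fun k : ℕ => p.eval (k : K) : ℕ → K) : SeqRing K) := by
  rw [hΦ]
  congr 1
  funext k
  rw [RatFunc.eval_algebraMap]
  simp

lemma Phi_inj {a : RatFunc K} (h : Φ a = 0) : a = 0 := by
  rw [hΦ] at h
  rw [← Filter.Germ.coe_zero, Filter.Germ.coe_eq] at h
  have hden := evt_ne_zero a.denom (RatFunc.denom_ne_zero a)
  have hnum : ∀ᶠ k : ℕ in atTop, a.num.eval (k : K) = 0 := by
    filter_upwards [h, hden] with k h1 h2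
    rw [hev] at h1
    rcases div_eq_zero_iff.mp h1 with h3 | h3
    · exact h3
    · exact absurd h3 h2
  have := poly_zero_of_evt a.num hnum
  exact RatFunc.num_eq_zero_iff.mp this

lemma L1 (a : RatFunc K) : SG K (Φ a) = Φ (shiftR a) := by
  have h1 : a * algebraMap K[X] (RatFunc K) a.denom = algebraMap K[X] (RatFunc K) a.num := by
    have hne : algebraMap K[X] (RatFunc K) a.denom ≠ 0 :=
      RatFunc.algebraMap_ne_zero (RatFunc.denom_ne_zero a)
    exact ((div_eq_iff hne).mp (RatFunc.num_div_denom a)).symm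
  have h2 : shiftR a * algebraMap K[X] (RatFunc K) (shiftP a.denom)
      = algebraMap K[X] (RatFunc K) (shiftP a.num) := by
    rw [← shiftR_alg, ← shiftR_alg, ← map_mul, h1]
  have h3 := congrArg Φ h2
  rw [map_mul, Phi_alg Φ hΦ, Phi_alg Φ hΦ, hΦ] at h3
  rw [← Filter.Germ.coe_mul, Filter.Germ.coe_eq] at h3
  have hden : ∀ᶠ k : ℕ in atTop, a.denom.eval ((k : K) + 1) ≠ 0 := by
    have := (tendsto_add_atTop_nat 1).eventually (evt_ne_zero a.denom (RatFunc.denom_ne_zero a))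
    filter_upwards [this] with k hk
    rwa [Nat.cast_add, Nat.cast_one] at hk
  rw [hΦ, SG_coe, hΦ, Filter.Germ.coe_eq]
  filter_upwards [h3, hden] with k h4 h5
  simp only [Pi.mul_apply] at h4
  rw [shiftP_eval, shiftP_eval] at h4
  rw [hev a (k + 1), Nat.cast_add, Nat.cast_one, div_eq_iff h5]
  exact h4.symm

lemma Phi_u : Φ (uu K) = ((fun k : ℕ => ((k : K) + 1)⁻¹ : ℕ → K) : SeqRing K) := by
  have h1 : uu K * algebraMap K[X] (RatFunc K) (X + 1) = 1 := inv_mul_cancel₀ hXne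
  have h2 := congrArg Φ h1
  rw [map_mul, map_one, Phi_alg Φ hΦ, hΦ] at h2
  rw [← Filter.Germ.coe_mul, ← Filter.Germ.coe_one, Filter.Germ.coe_eq] at h2
  rw [hΦ, Filter.Germ.coe_eq]
  filter_upwards [h2] with k h3
  simp only [Pi.mul_apply, Pi.one_apply, Polynomial.eval_add, Polynomial.eval_X,
    Polynomial.eval_one] at h3
  have hk0 : (k : K) + 1 ≠ 0 := by
    have := Nat.cast_add_one_ne_zero (R := K) k
    exact_mod_cast this
  field_simp at h3 ⊢
  rw [h3]

lemma L2 : SG K ((fun k : ℕ => Hnum K k : ℕ → K) : SeqRing K)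
    = ((fun k : ℕ => Hnum K k : ℕ → K) : SeqRing K) + Φ (uu K) := by
  rw [SG_coe, Phi_u Φ hΦ, ← Filter.Germ.coe_add]
  congr 1
  funext k
  rw [Pi.add_apply, Hnum_succ]

lemma no_b (m : ℕ) (hm : 1 ≤ m) (b : RatFunc K)
    (heq : shiftR b + uu K * (m : RatFunc K) = b) : False := by
  have hmK : (m : K) ≠ 0 := Nat.cast_ne_zero.mpr (by omega)
  have h1 := congrArg Φ heq
  rw [map_add, map_mul, map_natCast, ← L1 Φ hΦ, Phi_u Φ hΦ] at h1
  rw [hΦ, SG_coe, ← germ_natCast, ← Filter.Germ.coe_mul, ← Filter.Germ.coe_add,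
    Filter.Germ.coe_eq] at h1
  -- h1 : eventually, c (k+1) + (k+1)⁻¹ * m = c k
  set c : ℕ → K := fun k => RatFunc.eval (RingHom.id K) (k : K) b with hc
  obtain ⟨N, hN⟩ := Filter.eventually_atTop.mp h1
  have tel : ∀ k, N ≤ k → c k + (m : K) * Hnum K k = c N + (m : K) * Hnum K N := by
    intro k hk
    induction k, hk using Nat.le_induction with
    | base => rfl
    | succ k hk ih =>
      have h2 := hN k hk
      simp only [Pi.add_apply, Pi.mul_apply] at h2
      rw [Hnum_succ, ← ih]
      rw [← h2]
      ring
  set γ := c N + (m : K) * Hnum K N with hγ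
  have hden := evt_ne_zero b.denom (RatFunc.denom_ne_zero b)
  have hfin : ∀ᶠ k : ℕ in atTop,
      (Polynomial.C γ * b.denom - b.num).eval (k : K)
        = Hnum K k * (Polynomial.C (m : K) * b.denom).eval (k : K) := by
    filter_upwards [hden, Filter.eventually_atTop.mpr ⟨N, fun k hk => tel k hk⟩] with k h5 h6
    have hck : c k = b.num.eval (k : K) / b.denom.eval (k : K) := hev b k
    have h7 : c k = γ - (m : K) * Hnum K k := by
      rw [← h6]; ring
    rw [hck] at h7
    rw [Polynomial.eval_sub, Polynomial.eval_mul, Polynomial.eval_mul, Polynomial.eval_C,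
      Polynomial.eval_C]
    field_simp at h7
    linear_combination -h7
  apply no_rat (Polynomial.C γ * b.denom - b.num) (Polynomial.C (m : K) * b.denom)
  · exact mul_ne_zero (by simpa using hmK) (RatFunc.denom_ne_zero b)
  · exact hfin

lemma key : ∀ (n : ℕ) (f : Polynomial (RatFunc K)), f.natDegree ≤ n →
    Polynomial.eval₂ Φ ((fun k : ℕ => Hnum K k : ℕ → K) : SeqRing K) f = 0 → f = 0 := by
  intro n
  induction n using Nat.strong_induction_on with
  | _ n IH =>
    intro f hdeg hrel
    by_cases hf0 : f = 0
    · exact hf0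
    exfalso
    set H : SeqRing K := ((fun k : ℕ => Hnum K k : ℕ → K) : SeqRing K) with hH
    by_cases hd0 : f.natDegree = 0
    · obtain ⟨a, rfl⟩ : ∃ a, f = Polynomial.C a := ⟨f.coeff 0, Polynomial.eq_C_of_natDegree_eq_zero hd0⟩
      rw [Polynomial.eval₂_C] at hrel
      exact hf0 (by rw [Phi_inj Φ hΦ hrel, map_zero])
    set m := f.natDegree with hm
    have hm1 : 1 ≤ m := Nat.one_le_iff_ne_zero.mpr hd0
    have hlc : f.leadingCoeff ≠ 0 := Polynomial.leadingCoeff_ne_zero.mpr hf0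
    set g : Polynomial (RatFunc K) := f * Polynomial.C f.leadingCoeff⁻¹ with hg
    have hgmonic : g.Monic := Polynomial.monic_mul_leadingCoeff_inv hf0
    have hg0 : g ≠ 0 := hgmonic.ne_zero
    have hgdeg : g.natDegree = m := by
      rw [hg, Polynomial.natDegree_mul hf0 (by
        simp only [Ne, Polynomial.C_eq_zero]
        exact inv_ne_zero hlc)]
      simp [hm]
    have hgrel : Polynomial.eval₂ Φ H g = 0 := by
      rw [hg, Polynomial.eval₂_mul, hrel, zero_mul]
    set g1 : Polynomial (RatFunc K) := (g.map shiftR).comp (X + Polynomial.C (uu K)) with hg1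
    have hmapmonic : (g.map shiftR).Monic := hgmonic.map shiftR
    have hg1monic : g1.Monic := hmapmonic.comp (Polynomial.monic_X_add_C (uu K)) (by
      rw [Polynomial.natDegree_X_add_C]
      omega)
    have hmapdeg : (g.map shiftR).natDegree = m := by
      rw [Polynomial.natDegree_map_eq_of_injective (shiftR (K := K)).injective, hgdeg]
    have hg1deg : g1.natDegree = m := by
      rw [hg1, Polynomial.natDegree_comp, hmapdeg, Polynomial.natDegree_X_add_C, mul_one]
    have hg1rel : Polynomial.eval₂ Φ H g1 = 0 := by
      rw [hg1, Polynomial.eval₂_comp, Polynomial.eval₂_map]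
      have h1 : Polynomial.eval₂ Φ H (X + Polynomial.C (uu K)) = H + Φ (uu K) := by
        rw [Polynomial.eval₂_add, Polynomial.eval₂_X, Polynomial.eval₂_C]
      rw [h1]
      have h2 : (SG K).comp Φ = Φ.comp shiftR := RingHom.ext fun a => L1 Φ hΦ a
      have h3 := Polynomial.hom_eval₂ g Φ (SG K) H
      rw [h2, L2 Φ hΦ] at h3
      rw [← hH] at h3
      rw [← h3, hgrel, map_zero]
    have hσg : g1 = g := by
      have hg2rel : Polynomial.eval₂ Φ H (g1 - g) = 0 := by
        rw [Polynomial.eval₂_sub, hg1rel, hgrel, sub_zero]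
      by_cases h2 : g1 - g = 0
      · rwa [sub_eq_zero] at h2
      exfalso
      have hdlt : (g1 - g).degree < g1.degree := by
        apply Polynomial.degree_sub_lt
        · rw [Polynomial.degree_eq_natDegree hg1monic.ne_zero,
            Polynomial.degree_eq_natDegree hg0, hg1deg, hgdeg]
        · exact hg1monic.ne_zero
        · rw [hg1monic.leadingCoeff, hgmonic.leadingCoeff]
      have hndlt : (g1 - g).natDegree < m := by
        have := Polynomial.natDegree_lt_natDegree h2 hdlt
        rwa [hg1deg] at this
      exact h2 (IH (g1 - g).natDegree (by omega) (g1 - g) le_rfl hg2rel)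
    -- coefficient of X^(m-1)
    set t := m - 1 with ht
    have htm : m = t + 1 := by omega
    set b : RatFunc K := g.coeff t with hb
    have hcoeff : shiftR b + uu K * ((m : ℕ) : RatFunc K) = b := by
      have h4 := congrArg (fun p : Polynomial (RatFunc K) => p.coeff t) hσg
      rw [← hb] at h4
      have h5 : g1.coeff t = shiftR b + uu K * ((m : ℕ) : RatFunc K) := by
        rw [hg1, Polynomial.comp, Polynomial.eval₂_eq_sum_range, hmapdeg, htm]
        rw [Polynomial.finset_sum_coeff]
        rw [Finset.sum_range_succ, Finset.sum_range_succ]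
        have hzero : ∀ i ∈ Finset.range t,
            (Polynomial.C ((g.map shiftR).coeff i) * (X + Polynomial.C (uu K)) ^ i).coeff t = 0 := by
          intro i hi
          rw [Finset.mem_range] at hi
          rw [Polynomial.coeff_C_mul, Polynomial.coeff_X_add_C_pow,
            Nat.choose_eq_zero_of_lt hi]
          simp
        rw [Finset.sum_eq_zero hzero, zero_add]
        rw [Polynomial.coeff_C_mul, Polynomial.coeff_C_mul, Polynomial.coeff_X_add_C_pow,
          Polynomial.coeff_X_add_C_pow]
        rw [Nat.choose_self, Nat.sub_self, pow_zero, Nat.choose_succ_self_right]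
        have hcm : (g.map shiftR).coeff (t + 1) = 1 := by
          have : g.coeff (t + 1) = 1 := by
            have := hgmonic.leadingCoeff
            rwa [Polynomial.leadingCoeff, hgdeg, htm] at this
          rw [Polynomial.coeff_map, this, map_one]
        rw [hcm, Polynomial.coeff_map, ← hb]
        have h6 : t + 1 - t = 1 := by omega
        rw [h6, pow_one, Nat.cast_one, mul_one, one_mul, mul_one]
      rw [h4] at h5
      exact h5.symm
    exact no_b Φ hΦ m hm1 b hcoeff

end Core

/-- A ring homomorphism `τ : K(x)[h] → S(K)` (where `K(x)[h]` is realized as the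
polynomial ring in `h` over `K(x)`) which on `K(x)` is the evaluation embedding
`p/q ↦ ⟨p(k)/q(k)⟩` and sends `h` to the germ of the harmonic numbers `⟨H_k⟩`
is injective. -/
theorem stmt18 (K : Type) [Field K] [CharZero K]
    (τ : Polynomial (RatFunc K) →+* SeqRing K)
    (hrat : ∀ f : RatFunc K,
      τ (Polynomial.C f)
        = ((fun k : ℕ => RatFunc.eval (RingHom.id K) (k : K) f : ℕ → K) : SeqRing K))
    (hh : τ Polynomial.X = ((fun k : ℕ => Hnum K k : ℕ → K) : SeqRing K)) :
    Function.Injective τ := by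
  set Φ : RatFunc K →+* SeqRing K := τ.comp Polynomial.C with hΦdef
  have hΦ : ∀ a : RatFunc K,
      Φ a = ((fun k : ℕ => RatFunc.eval (RingHom.id K) (k : K) a : ℕ → K) : SeqRing K) :=
    fun a => hrat a
  have hhom : τ = Polynomial.eval₂RingHom Φ (τ Polynomial.X) := by
    apply Polynomial.ringHom_ext
    · intro a
      simp [hΦdef]
    · simp
  rw [injective_iff_map_eq_zero]
  intro f hf
  apply key Φ hΦ f.natDegree f le_rfl
  rw [← hh]
  have : τ f = Polynomial.eval₂ Φ (τ Polynomial.X) f := by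
    rw [hhom]
    simp
  rw [← this]
  exact hf
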